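/- Let (A, ∗, ∘) be an anti-pre-Poisson algebra. Define x⋆y = x∗y + y∗x and [x,y] = x∘y - y∘x. Then (A, ⋆, [,]) is a Poisson algebra; in particular the Leibniz rule [z, x⋆y] = [z,x]⋆y + x⋆[z,y] holds for all x,y,z ∈ A. -/
import Mathlib


/-- An anti-Zinbiel algebra structure on a vector space `A`. -/
def IsAntiZinbiel {k A : Type*} [Field k] [AddCommGroup A] [Module k A]
    (s : A →ₗ[k] A →ₗ[k] A) : Prop :=
  (∀ x y z, s x (s y z) = - s (s x y + s y x) z) ∧
  (∀ x y z, s x (s y z) = - s (s y z + s z y) x) ∧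
  (∀ x y z, s x (s y z) = s z (s y x)) ∧
  (∀ x y z, s z (s x y) = s x (s z y))

/-- An anti-pre-Lie algebra structure on a vector space `A`. -/
def IsAntiPreLie {k A : Type*} [Field k] [AddCommGroup A] [Module k A]
    (c : A →ₗ[k] A →ₗ[k] A) : Prop :=
  (∀ x y z, c x (c y z) - c y (c x z) = c (c y x - c x y) z) ∧
  (∀ x y z, c (c x y - c y x) z + c (c y z - c z y) x + c (c z x - c x z) y = 0)

/-- An anti-pre-Poisson algebra structure `(A, ∗, ∘)`:
an anti-Zinbiel operation `s`, an anti-pre-Lie operation `c`, and the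
three compatibility conditions. -/
def IsAntiPrePoisson {k A : Type*} [Field k] [AddCommGroup A] [Module k A]
    (s c : A →ₗ[k] A →ₗ[k] A) : Prop :=
  IsAntiZinbiel s ∧ IsAntiPreLie c ∧
  (∀ x y z, s (c x y - c y x) z = s y (c x z) - c x (s y z)) ∧
  (∀ x y z, c (s x y + s y x) z = - s x (c y z) - s y (c x z)) ∧
  (∀ x y z, c z (s x y + s y x) + s x (c y z) + s y (c x z) = s x (c z y) + s y (c z x))

/-- the sub-adjacent operations `x⋆y = x∗y + y∗x` and `[x,y] = x∘y - y∘x`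
of an anti-pre-Poisson algebra form a Poisson algebra; in particular the Leibniz rule
`[z, x⋆y] = [z,x]⋆y + x⋆[z,y]` holds. -/
theorem antiPrePoisson_subadjacent_poisson {k A : Type*} [Field k] [AddCommGroup A] [Module k A]
    (s c : A →ₗ[k] A →ₗ[k] A) (h : IsAntiPrePoisson s c) :
    (∀ x y : A, s x y + s y x = s y x + s x y) ∧
    (∀ x y z : A,
      s (s x y + s y x) z + s z (s x y + s y x) =
        s x (s y z + s z y) + s (s y z + s z y) x) ∧
    (∀ x y : A, c x y - c y x = -(c y x - c x y)) ∧
    (∀ x y z : A,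
      (c (c x y - c y x) z - c z (c x y - c y x)) +
      (c (c y z - c z y) x - c x (c y z - c z y)) +
      (c (c z x - c x z) y - c y (c z x - c x z)) = 0) ∧
    (∀ x y z : A,
      c z (s x y + s y x) - c (s x y + s y x) z =
        (s (c z x - c x z) y + s y (c z x - c x z)) +
        (s x (c z y - c y z) + s (c z y - c y z) x)) := by
  obtain ⟨⟨A1, A2, A3, A4⟩, ⟨P1, P2⟩, C1, C2, C3⟩ := h
  refine ⟨fun x y => add_comm _ _, ?_, fun x y => (neg_sub _ _).symm, ?_, ?_⟩
  · intro x y z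
    have e1 : s x (s y z) + s (s x y + s y x) z = 0 := by rw [A1 x y z]; abel
    have e2 : s x (s y z) + s (s y z + s z y) x = 0 := by rw [A2 x y z]; abel
    have e3 : s x (s y z) - s z (s y x) = 0 := sub_eq_zero.mpr (A3 x y z)
    have e4 : s z (s x y) - s x (s z y) = 0 := sub_eq_zero.mpr (A4 x y z)
    have H : (s x (s y z) + s (s x y + s y x) z) - (s x (s y z) + s (s y z + s z y) x)
        - (s x (s y z) - s z (s y x)) + (s z (s x y) - s x (s z y)) = 0 := by
      rw [e1, e2, e3, e4]; abel
    rw [← sub_eq_zero]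
    simp only [map_add, map_sub, map_neg, LinearMap.add_apply, LinearMap.sub_apply,
      LinearMap.neg_apply] at H ⊢
    rw [← H]; abel
  · intro x y z
    have e5 : c x (c y z) - c y (c x z) - c (c y x - c x y) z = 0 :=
      sub_eq_zero.mpr (P1 x y z)
    have e6 : c z (c x y) - c x (c z y) - c (c x z - c z x) y = 0 :=
      sub_eq_zero.mpr (P1 z x y)
    have e7 : c y (c z x) - c z (c y x) - c (c z y - c y z) x = 0 :=
      sub_eq_zero.mpr (P1 y z x)
    have j := P2 x y z
    have H : -(c x (c y z) - c y (c x z) - c (c y x - c x y) z)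
        - (c z (c x y) - c x (c z y) - c (c x z - c z x) y)
        - (c y (c z x) - c z (c y x) - c (c z y - c y z) x)
        + (c (c x y - c y x) z + c (c y z - c z y) x + c (c z x - c x z) y)
        + (c (c x y - c y x) z + c (c y z - c z y) x + c (c z x - c x z) y) = 0 := by
      rw [e5, e6, e7, j]; abel
    simp only [map_add, map_sub, map_neg, LinearMap.add_apply, LinearMap.sub_apply,
      LinearMap.neg_apply] at H ⊢
    rw [← H]; abel
  · intro x y z
    have f2 : c (s x y + s y x) z - (- s x (c y z) - s y (c x z)) = 0 :=
      sub_eq_zero.mpr (C2 x y z)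
    have f3 : (c z (s x y + s y x) + s x (c y z) + s y (c x z)) - (s x (c z y) + s y (c z x)) = 0 :=
      sub_eq_zero.mpr (C3 x y z)
    have f4 : s (c z x - c x z) y - (s x (c z y) - c z (s x y)) = 0 :=
      sub_eq_zero.mpr (C1 z x y)
    have f5 : s (c z y - c y z) x - (s y (c z x) - c z (s y x)) = 0 :=
      sub_eq_zero.mpr (C1 z y x)
    have H : -(c (s x y + s y x) z - (- s x (c y z) - s y (c x z)))
        + ((c z (s x y + s y x) + s x (c y z) + s y (c x z)) - (s x (c z y) + s y (c z x)))
        + ((c z (s x y + s y x) + s x (c y z) + s y (c x z)) - (s x (c z y) + s y (c z x)))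
        - (s (c z x - c x z) y - (s x (c z y) - c z (s x y)))
        - (s (c z y - c y z) x - (s y (c z x) - c z (s y x))) = 0 := by
      rw [f2, f3, f4, f5]; abel
    rw [← sub_eq_zero]
    simp only [map_add, map_sub, map_neg, LinearMap.add_apply, LinearMap.sub_apply,
      LinearMap.neg_apply] at H ⊢
    rw [← H]; abel
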